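/- Let n ≥ 1, let 0 < b ≤ 1, let y₁, …, yₙ satisfy b ≤ yᵢ ≤ 1 for all i, and let x₁, …, xₙ ∈ [0,1] have average ā := (x₁ + ⋯ + xₙ)/n < b. Then Σ_{i : xᵢ < b} d(xᵢ, yᵢ) ≥ Σ_{i : xᵢ < b} d(xᵢ, b) ≥ n·d(ā, b), where d(x,y) = x·log(x/y) + (1−x)·log((1−x)/(1−y)) is the Bernoulli KL divergence, interpreted as a value in [0, +∞] with the conventions 0·log 0 = 0 and d(x,y) = +∞ when y ∈ {0,1} and x ≠ y. -/

import Mathlib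

open Set
open scoped ENNReal

/-- Bernoulli Kullback–Leibler divergence with values in `[0, +∞]`, with the
conventions `0·log 0 = 0` and `d(x,y) = +∞` when `y ∈ {0,1}` and `x ≠ y`. -/
noncomputable def bernKL (x y : ℝ) : ℝ≥0∞ :=
  if (y = 0 ∨ y = 1) ∧ x ≠ y then ⊤
  else ENNReal.ofReal (x * Real.log (x/y) + (1-x) * Real.log ((1-x)/(1-y)))

/-- KL-type identity: φ x u = ψ(u) + entropy term, for u ∈ (0,1), x ∈ [0,1]. -/
lemma phi_eq {x u : ℝ} (hx : x ∈ Icc (0:ℝ) 1) (hu0 : 0 < u) (hu1 : u < 1) :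
    x * Real.log (x/u) + (1-x) * Real.log ((1-x)/(1-u)) =
      (x * Real.log x + (1-x) * Real.log (1-x)) + (-(x * Real.log u) - (1-x) * Real.log (1-u)) := by
  obtain ⟨hx0, hx1⟩ := hx
  have h1u : (0:ℝ) < 1 - u := by linarith
  rcases eq_or_lt_of_le hx0 with h0 | h0
  · rw [← h0]
    simp [Real.log_div (by norm_num : (1:ℝ) ≠ 0) h1u.ne']
  rcases eq_or_lt_of_le hx1 with h1 | h1
  · rw [h1]
    simp [Real.log_div (by norm_num : (1:ℝ) ≠ 0) hu0.ne']
  have h1x : (0:ℝ) < 1 - x := by linarith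
  rw [Real.log_div h0.ne' hu0.ne', Real.log_div h1x.ne' h1u.ne']
  ring

lemma phi_nonneg {x u : ℝ} (hx : x ∈ Icc (0:ℝ) 1) (hu0 : 0 < u) (hu1 : u < 1) :
    0 ≤ x * Real.log (x/u) + (1-x) * Real.log ((1-x)/(1-u)) := by
  obtain ⟨hx0, hx1⟩ := hx
  have h1u : (0:ℝ) < 1 - u := by linarith
  rcases eq_or_lt_of_le hx0 with h0 | h0
  · rw [← h0]
    have := Real.log_nonpos h1u.le (by linarith : 1-u ≤ 1)
    simp only [zero_mul, sub_zero, one_mul, zero_add, Real.log_div (by norm_num : (1:ℝ) ≠ 0) h1u.ne',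
      Real.log_one]
    linarith
  rcases eq_or_lt_of_le hx1 with h1 | h1
  · rw [h1]
    have := Real.log_nonpos hu0.le hu1.le
    simp only [sub_self, zero_mul, add_zero, one_mul, Real.log_div (by norm_num : (1:ℝ) ≠ 0) hu0.ne',
      Real.log_one]
    linarith
  have h1x : (0:ℝ) < 1 - x := by linarith
  have k1 : x - u ≤ x * Real.log (x/u) := by
    have := Real.log_le_sub_one_of_pos (div_pos hu0 h0)
    have hl : -(u/x - 1) ≤ Real.log (x/u) := by
      have e : Real.log (x/u) = - Real.log (u/x) := by rw [← Real.log_inv, inv_div]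
      rw [e]; linarith
    have := mul_le_mul_of_nonneg_left hl h0.le
    have hux : x * (u/x) = u := by field_simp
    nlinarith
  have k2 : u - x ≤ (1-x) * Real.log ((1-x)/(1-u)) := by
    have := Real.log_le_sub_one_of_pos (div_pos h1u h1x)
    have hl : -((1-u)/(1-x) - 1) ≤ Real.log ((1-x)/(1-u)) := by
      have e : Real.log ((1-x)/(1-u)) = - Real.log ((1-u)/(1-x)) := by rw [← Real.log_inv, inv_div]
      rw [e]; linarith
    have := mul_le_mul_of_nonneg_left hl h1x.le
    have hux : (1-x) * ((1-u)/(1-x)) = 1-u := by field_simp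
    nlinarith
  linarith

/-- ψ is monotone on `[b, y] ⊆ (x, 1)`. -/
lemma psi_mono {x b y : ℝ} (hx0 : 0 ≤ x) (hb0 : 0 < b) (hxb : x < b) (hby : b ≤ y) (hy1 : y < 1) :
    -(x * Real.log b) - (1-x) * Real.log (1-b) ≤ -(x * Real.log y) - (1-x) * Real.log (1-y) := by
  set f : ℝ → ℝ := fun u => -(x * Real.log u) - (1-x) * Real.log (1-u) with hf
  have hmono : MonotoneOn f (Icc b y) := by
    have hc : ContinuousOn f (Icc b y) := by
      intro u hu
      have hu0 : u ≠ 0 := by have := hu.1; intro h; rw [h] at this; linarith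
      have hu1 : (1:ℝ) - u ≠ 0 := by have := hu.2; intro h; nlinarith [hu.2]
      have c2 : ContinuousAt (fun u : ℝ => Real.log (1-u)) u :=
        ContinuousAt.comp (Real.continuousAt_log hu1) (continuousAt_const.sub continuousAt_id)
      have c1 : ContinuousAt f u :=
        (((Real.continuousAt_log hu0).const_mul x).neg.sub (c2.const_mul (1-x)))
      exact c1.continuousWithinAt
    have hd : ∀ u ∈ interior (Icc b y), HasDerivAt f ((1-x) * (1-u)⁻¹ - x * u⁻¹) u := by
      intro u hu
      rw [interior_Icc] at hu
      have hu0 : 0 < u := lt_trans hb0 hu.1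
      have hu1 : (0:ℝ) < 1 - u := by have := hu.2; linarith
      have d1 : HasDerivAt (fun u => Real.log u) u⁻¹ u := Real.hasDerivAt_log hu0.ne'
      have d2 : HasDerivAt (fun u : ℝ => Real.log (1-u)) ((1-u)⁻¹ * (-1)) u :=
        (Real.hasDerivAt_log hu1.ne').comp u ((hasDerivAt_id u).const_sub 1)
      have := ((d1.const_mul x).neg.sub (d2.const_mul (1-x)))
      convert this using 1
      · rfl
      · rfl
      · rfl
      · ring
    apply monotoneOn_of_deriv_nonneg (convex_Icc b y) hc
    · intro u hu
      exact ((hd u hu).differentiableAt).differentiableWithinAt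
    · intro u hu
      rw [(hd u hu).deriv]
      rw [interior_Icc] at hu
      have hu0 : 0 < u := lt_trans hb0 hu.1
      have hu1 : (0:ℝ) < 1 - u := by have := hu.2; linarith
      rw [sub_nonneg, mul_inv_le_iff₀ hu0]
      have e : (1-x) * (1-u)⁻¹ = (1-x)/(1-u) := by ring
      rw [e, div_mul_eq_mul_div, le_div_iff₀ hu1]
      nlinarith [lt_trans hxb hu.1]
  exact hmono (left_mem_Icc.2 hby) (right_mem_Icc.2 hby) hby

lemma g_convex {b : ℝ} (hb0 : 0 < b) (hb1 : b < 1) :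
    ConvexOn ℝ (Icc (0:ℝ) 1) (fun t =>
      (t * Real.log t + (1-t) * Real.log (1-t)) +
        (-(t * Real.log b) - (1-t) * Real.log (1-b))) := by
  have f1 : ConvexOn ℝ (Icc (0:ℝ) 1) (fun t => t * Real.log t) :=
    Real.convexOn_mul_log.subset (Icc_subset_Ici_self) (convex_Icc 0 1)
  have f2 : ConvexOn ℝ (Icc (0:ℝ) 1) (fun t => (1-t) * Real.log (1-t)) := by
    refine ⟨convex_Icc 0 1, ?_⟩
    intro p hp q hq a c ha hc hac
    have h1 : (1:ℝ)-p ∈ Ici (0:ℝ) := by simp only [mem_Ici]; linarith [hp.2]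
    have h2 : (1:ℝ)-q ∈ Ici (0:ℝ) := by simp only [mem_Ici]; linarith [hq.2]
    have key := Real.convexOn_mul_log.2 h1 h2 ha hc hac
    simp only [smul_eq_mul] at key ⊢
    have e : 1 - (a*p + c*q) = a*(1-p) + c*(1-q) := by linear_combination -hac
    rw [e]; exact key
  have f3 : ConvexOn ℝ (Icc (0:ℝ) 1) (fun t => -(t * Real.log b) - (1-t) * Real.log (1-b)) := by
    refine ⟨convex_Icc 0 1, ?_⟩
    intro p hp q hq a c ha hc hac
    simp only [smul_eq_mul]
    apply le_of_eq
    linear_combination (Real.log (1-b)) * hac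
  exact (f1.add f2).add f3

theorem stmt7 (n : ℕ) (hn : 1 ≤ n) (b : ℝ) (hb : 0 < b) (hb1 : b ≤ 1)
    (x y : Fin n → ℝ) (hy : ∀ i, y i ∈ Icc b 1) (hx : ∀ i, x i ∈ Icc (0:ℝ) 1)
    (havg : (∑ i, x i) / n < b) :
    (∑ i ∈ Finset.univ.filter (fun i => x i < b), bernKL (x i) b) ≤
      (∑ i ∈ Finset.univ.filter (fun i => x i < b), bernKL (x i) (y i)) ∧
    (n : ℝ≥0∞) * bernKL ((∑ i, x i) / n) b ≤
      ∑ i ∈ Finset.univ.filter (fun i => x i < b), bernKL (x i) b := by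
  classical
  have hn0 : (0:ℝ) < n := by exact_mod_cast hn
  rcases eq_or_lt_of_le hb1 with hbe | hb1'
  · -- b = 1
    constructor
    · refine le_of_eq (Finset.sum_congr rfl fun i _ => ?_)
      have : y i = b := le_antisymm (by rw [hbe]; exact (hy i).2) (hy i).1
      rw [this]
    · have hex : ∃ i, x i < b := by
        by_contra h
        push_neg at h
        have hall : ∀ i, x i = b := fun i =>
          le_antisymm (by rw [hbe]; exact (hx i).2) (h i)
        have h2 : (∑ i, x i) < b * n := (div_lt_iff₀ hn0).1 havg
        have h3 : (∑ _i : Fin n, b) ≤ ∑ i, x i := Finset.sum_le_sum fun i _ => h i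
        simp only [Finset.sum_const, Finset.card_univ, Fintype.card_fin, nsmul_eq_mul] at h3
        nlinarith
      obtain ⟨i, hi⟩ := hex
      have hmem : i ∈ Finset.univ.filter (fun i => x i < b) := by simp [hi]
      have htop : (∑ i ∈ Finset.univ.filter (fun i => x i < b), bernKL (x i) b) = ⊤ := by
        rw [ENNReal.sum_eq_top]
        exact ⟨i, hmem, by rw [bernKL, if_pos ⟨Or.inr hbe, ne_of_lt hi⟩]⟩
      rw [htop]; exact le_top
  -- b < 1
  have hbcond : ¬(b = 0 ∨ b = 1) := by push_neg; exact ⟨hb.ne', hb1'.ne⟩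
  have bernKL_eq : ∀ z : ℝ, bernKL z b =
      ENNReal.ofReal (z * Real.log (z/b) + (1-z) * Real.log ((1-z)/(1-b))) := by
    intro z; rw [bernKL, if_neg (fun h => hbcond h.1)]
  set g : ℝ → ℝ := fun t =>
      (t * Real.log t + (1-t) * Real.log (1-t)) +
        (-(t * Real.log b) - (1-t) * Real.log (1-b)) with hgdef
  have hgid : ∀ z ∈ Icc (0:ℝ) 1,
      z * Real.log (z/b) + (1-z) * Real.log ((1-z)/(1-b)) = g z := by
    intro z hz; rw [phi_eq hz hb hb1']
  have hg0 : ∀ z ∈ Icc (0:ℝ) 1, 0 ≤ g z := by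
    intro z hz; rw [← hgid z hz]; exact phi_nonneg hz hb hb1'
  have hgb : g b = 0 := by rw [hgdef]; ring
  have hbmem : b ∈ Icc (0:ℝ) 1 := ⟨hb.le, hb1⟩
  constructor
  · -- first inequality, termwise
    refine Finset.sum_le_sum fun i hi => ?_
    rw [Finset.mem_filter] at hi
    have hib : x i < b := hi.2
    rcases eq_or_lt_of_le (hy i).1 with he | hlt
    · rw [← he]
    rcases eq_or_lt_of_le (hy i).2 with h1 | h1
    · have htop : bernKL (x i) (y i) = ⊤ := by
        rw [bernKL, if_pos ⟨Or.inr h1, by rw [h1]; exact ne_of_lt (lt_of_lt_of_le hib hb1)⟩]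
      rw [htop]; exact le_top
    · have hyc : ¬((y i = 0 ∨ y i = 1) ∧ x i ≠ y i) := by
        rintro ⟨h0 | h0, -⟩
        · exact absurd h0 (lt_trans hb hlt).ne'
        · exact absurd h0 h1.ne
      rw [bernKL_eq, bernKL, if_neg hyc]
      apply ENNReal.ofReal_le_ofReal
      rw [phi_eq (hx i) hb hb1', phi_eq (hx i) (lt_trans hb hlt) h1]
      have := psi_mono (hx i).1 hb hib hlt.le h1
      linarith
  · -- second inequality via Jensen
    set p : Fin n → ℝ := fun i => min (x i) b with hpdef
    have hp : ∀ i, p i ∈ Icc (0:ℝ) 1 :=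
      fun i => ⟨le_min (hx i).1 hb.le, (min_le_left _ _).trans (hx i).2⟩
    have hg := g_convex hb hb1'
    have hw : (∑ _i : Fin n, (n:ℝ)⁻¹) = 1 := by
      simp only [Finset.sum_const, Finset.card_univ, Fintype.card_fin, nsmul_eq_mul]
      field_simp
    have hj := hg.map_sum_le (fun i _ => by positivity) hw (fun i _ => hp i)
    simp only [smul_eq_mul] at hj
    have e1 : (∑ i, (n:ℝ)⁻¹ * p i) = (∑ i, p i) / n := by
      rw [← Finset.mul_sum]; ring
    have e2 : (∑ i, (n:ℝ)⁻¹ * g (p i)) = (∑ i, g (p i)) / n := by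
      rw [← Finset.mul_sum]; ring
    rw [e1, e2] at hj
    set a : ℝ := (∑ i, x i) / n with hadef
    set a' : ℝ := (∑ i, p i) / n with ha'def
    have hsum_le : (∑ i, p i) ≤ ∑ i, x i := Finset.sum_le_sum fun i _ => min_le_left _ _
    have ha'a : a' ≤ a := by
      rw [ha'def, hadef]
      exact div_le_div_of_nonneg_right hsum_le hn0.le
    have hamem : a ∈ Icc (0:ℝ) 1 :=
      ⟨div_nonneg (Finset.sum_nonneg fun i _ => (hx i).1) hn0.le, le_trans havg.le hb1⟩
    have ha'mem : a' ∈ Icc (0:ℝ) 1 :=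
      ⟨div_nonneg (Finset.sum_nonneg fun i _ => (hp i).1) hn0.le, le_trans ha'a hamem.2⟩
    have hga : g a ≤ g a' := by
      have hseg : a ∈ segment ℝ a' b := by
        rw [segment_eq_Icc (le_trans ha'a havg.le)]
        exact ⟨ha'a, havg.le⟩
      obtain ⟨s, t, hs, ht, hst, he⟩ := hseg
      have h2 := hg.2 ha'mem hbmem hs ht hst
      rw [he] at h2
      simp only [smul_eq_mul] at h2
      have hgnn := hg0 a' ha'mem
      calc g a ≤ s * g a' + t * g b := h2
        _ = s * g a' := by rw [hgb]; ring
        _ ≤ 1 * g a' := by nlinarith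
        _ = g a' := one_mul _
    have hsplit : (∑ i, g (p i)) =
        ∑ i ∈ Finset.univ.filter (fun i => x i < b), g (x i) := by
      rw [← Finset.sum_filter_add_sum_filter_not Finset.univ (fun i => x i < b)
        (fun i => g (p i))]
      have A : (∑ i ∈ Finset.univ.filter (fun i => x i < b), g (p i)) =
          ∑ i ∈ Finset.univ.filter (fun i => x i < b), g (x i) := by
        refine Finset.sum_congr rfl fun i hi => ?_
        rw [Finset.mem_filter] at hi
        have : p i = x i := min_eq_left hi.2.le
        rw [this]
      have B : (∑ i ∈ Finset.univ.filter (fun i => ¬ x i < b), g (p i)) = 0 := by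
        refine Finset.sum_eq_zero fun i hi => ?_
        rw [Finset.mem_filter] at hi
        have : p i = b := min_eq_right (not_lt.1 hi.2)
        rw [this, hgb]
      rw [A, B, add_zero]
    have hreal : (n:ℝ) * g a ≤ ∑ i ∈ Finset.univ.filter (fun i => x i < b), g (x i) := by
      rw [← hsplit]
      have h1 : g a' * n ≤ ∑ i, g (p i) := (le_div_iff₀ hn0).1 hj
      nlinarith [mul_le_mul_of_nonneg_left hga hn0.le]
    calc (n : ℝ≥0∞) * bernKL a b = ENNReal.ofReal ((n:ℝ) * g a) := by
          rw [bernKL_eq, hgid a hamem, ← ENNReal.ofReal_natCast n,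
            ← ENNReal.ofReal_mul (Nat.cast_nonneg n)]
      _ ≤ ENNReal.ofReal (∑ i ∈ Finset.univ.filter (fun i => x i < b), g (x i)) :=
          ENNReal.ofReal_le_ofReal hreal
      _ = ∑ i ∈ Finset.univ.filter (fun i => x i < b), ENNReal.ofReal (g (x i)) :=
          ENNReal.ofReal_sum_of_nonneg (fun i _ => hg0 _ (hx i))
      _ = ∑ i ∈ Finset.univ.filter (fun i => x i < b), bernKL (x i) b :=
          Finset.sum_congr rfl fun i _ => by rw [bernKL_eq, hgid _ (hx i)]
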